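/- Let n ≥ 2, c ∈ ℂ^×, and let x = (x_2,…,x_{2n−1}) be nonzero complex numbers such that all denominators occurring below are nonzero. Then γ_0(e_0^c(x)) = c²·γ_0(x); γ_0(e_1^c(x)) = c^{−1}·γ_0(x); γ_0(e_n^c(x)) = c^{−1}·γ_0(x); and γ_0(e_i^c(x)) = γ_0(x) for 2 ≤ i ≤ n−1, where γ_0(x) = 1/(x_n x_{n+1}). -/

import Mathlib

noncomputable section

/-- `Sf n x k = ∑_{j=2}^{k} x_j / x_{n+j-1}` (so `Sf n x 1 = 0`, `S(x) = Sf n x n`). -/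
def Sf (n : ℕ) (x : ℕ → ℂ) (k : ℕ) : ℂ :=
  ∑ j ∈ Finset.Icc 2 k, x j / x (n + j - 1)

/-- `Tf n x k = ∑_{j=k+1}^{n} x_j / x_{n+j-1}` (so `Tf n x n = 0`). -/
def Tf (n : ℕ) (x : ℕ → ℂ) (k : ℕ) : ℂ :=
  ∑ j ∈ Finset.Icc (k + 1) n, x j / x (n + j - 1)

/-- The rational map `e_0^c`. -/
def e0M (n : ℕ) (c : ℂ) (x : ℕ → ℂ) (k : ℕ) : ℂ :=
  if k ≤ n - 1 then x k * Sf n x n / (c * Sf n x k + Tf n x k)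
  else if k ≤ n + 1 then x k / c
  else x k * (c * Sf n x (k - n) + Tf n x (k - n)) / (c * Sf n x n)

/-- The rational maps `e_i^c` for `1 ≤ i ≤ n`. -/
def eOp (n i : ℕ) (c : ℂ) (x : ℕ → ℂ) : ℕ → ℂ :=
  if i = 1 then fun k => if k = n + 1 then c * x k else x k
  else if i = n then fun k => if k = n then c * x k else x k
  else fun k =>
    if k = i then
      (c * (x i * x (n + i) + x (i + 1) * x (n + i - 1)) /
        (c * x i * x (n + i) + x (i + 1) * x (n + i - 1))) * x k
    else if k = n + i then
      (c / (c * (x i * x (n + i) + x (i + 1) * x (n + i - 1)) /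
        (c * x i * x (n + i) + x (i + 1) * x (n + i - 1)))) * x k
    else x k

/-- `γ_0(x) = 1/(x_n x_{n+1})`. -/
def gam0 (n : ℕ) (x : ℕ → ℂ) : ℂ := 1 / (x n * x (n + 1))

/-- `γ_0(e_0^c(x)) = c²·γ_0(x)`, `γ_0(e_1^c(x)) = c⁻¹·γ_0(x)`,
`γ_0(e_n^c(x)) = c⁻¹·γ_0(x)`, and `γ_0(e_i^c(x)) = γ_0(x)` for `2 ≤ i ≤ n-1`. -/
theorem stmt6 (n : ℕ) (hn : 2 ≤ n) (c : ℂ) (hc : c ≠ 0) (x : ℕ → ℂ)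
    (hx : ∀ k, 2 ≤ k → k ≤ 2 * n - 1 → x k ≠ 0)
    (hS : Sf n x n ≠ 0)
    (hden0 : ∀ k, 2 ≤ k → k ≤ n - 1 → c * Sf n x k + Tf n x k ≠ 0)
    (hdenI : ∀ i, 2 ≤ i → i ≤ n - 1 →
      c * x i * x (n + i) + x (i + 1) * x (n + i - 1) ≠ 0)
    (hnumI : ∀ i, 2 ≤ i → i ≤ n - 1 →
      x i * x (n + i) + x (i + 1) * x (n + i - 1) ≠ 0) :
    gam0 n (e0M n c x) = c ^ 2 * gam0 n x ∧
    gam0 n (eOp n 1 c x) = c⁻¹ * gam0 n x ∧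
    gam0 n (eOp n n c x) = c⁻¹ * gam0 n x ∧
    ∀ i, 2 ≤ i → i ≤ n - 1 → gam0 n (eOp n i c x) = gam0 n x := by
  have hxn : x n ≠ 0 := hx n hn (by omega)
  have hxn1 : x (n + 1) ≠ 0 := hx (n + 1) (by omega) (by omega)
  have hn1 : ¬ (n ≤ n - 1) := by omega
  have hn1' : ¬ (n + 1 ≤ n - 1) := by omega
  refine ⟨?_, ?_, ?_, ?_⟩
  · simp only [gam0, e0M, hn1, hn1', if_false, le_refl, if_true, Nat.le_succ, if_pos]
    field_simp
  · simp only [gam0, eOp, if_pos rfl, if_true, ite_true]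
    rw [if_neg (by omega : n ≠ n + 1)]
    field_simp
  · have hne : n ≠ 1 := by omega
    simp only [gam0, eOp, if_neg hne, if_pos rfl, if_true, ite_true]
    rw [if_neg (by omega : n + 1 ≠ n)]
    field_simp
  · intro i h2 hi
    have h1 : i ≠ 1 := by omega
    have hni : i ≠ n := by omega
    simp only [gam0, eOp, if_neg h1, if_neg hni]
    rw [if_neg (by omega : n ≠ i), if_neg (by omega : n ≠ n + i),
      if_neg (by omega : n + 1 ≠ i), if_neg (by omega : n + 1 ≠ n + i)]
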